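/- Let G be a topological group acting continuously on topological spaces Σ and Z, where Σ is Hausdorff, and let q : Σ → Z be a G-equivariant local homeomorphism. Assume that every z ∈ Z admits arbitrarily small open neighborhoods V (i.e., for every neighborhood U of z there is an open V with z ∈ V ⊆ U having the stated property) together with a sequence (z_n) converging to z such that for every n the set {g ∈ G : g·z_n ∈ V} is path-connected. Then q is injective on every G-orbit of Σ: for all ζ ∈ Σ and g ∈ G, q(g·ζ) = q(ζ) implies g·ζ = ζ. -/

import Mathlib

/-- Lemma 5.6: a `G`-equivariant local homeomorphism is injective on every `G`-orbit,
provided every point of the base admits arbitrarily small open neighbourhoods `V` together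
with a sequence `zₙ → z` such that each set `{g : G | g • zₙ ∈ V}` is path-connected. -/
theorem stmt_0 {G : Type*} [Group G] [TopologicalSpace G] [IsTopologicalGroup G]
    {X Z : Type*} [TopologicalSpace X] [TopologicalSpace Z] [T2Space X]
    [MulAction G X] [MulAction G Z] [ContinuousSMul G X] [ContinuousSMul G Z]
    (q : X → Z) (hq : IsLocalHomeomorph q)
    (heq : ∀ (g : G) (ζ : X), q (g • ζ) = g • q ζ)
    (hyp : ∀ z : Z, ∀ U ∈ nhds z, ∃ V : Set Z, IsOpen V ∧ z ∈ V ∧ V ⊆ U ∧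
      ∃ zs : ℕ → Z, Filter.Tendsto zs Filter.atTop (nhds z) ∧
        ∀ n : ℕ, IsPathConnected {g : G | g • zs n ∈ V}) :
    ∀ (ζ : X) (g : G), q (g • ζ) = q ζ → g • ζ = ζ := by
  intro ζ g hqg
  by_contra hne
  set z : Z := q ζ with hz
  -- `g` fixes `z`
  have hgz : g • z = z := by rw [hz, ← heq, hqg]
  -- charts around `ζ` and `g • ζ`
  obtain ⟨e₁, hζ₁, he₁⟩ := hq ζ
  obtain ⟨e₂, hζ₂, he₂⟩ := hq (g • ζ)
  -- Hausdorff separation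
  obtain ⟨O₁, O₂, hO₁, hO₂, hζO₁, hζO₂, hdisj⟩ := t2_separation (Ne.symm hne)
  set e : OpenPartialHomeomorph X Z := e₁.restrOpen O₁ hO₁ with he_def
  set f : OpenPartialHomeomorph X Z := e₂.restrOpen O₂ hO₂ with hf_def
  have he : q = e := he₁
  have hf : q = f := he₂
  have hζe : ζ ∈ e.source := by
    rw [he_def, OpenPartialHomeomorph.restrOpen_source]; exact ⟨hζ₁, hζO₁⟩
  have hζf : g • ζ ∈ f.source := by
    rw [hf_def, OpenPartialHomeomorph.restrOpen_source]; exact ⟨hζ₂, hζO₂⟩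
  have hsrc_disj : Disjoint e.source f.source := by
    refine Set.disjoint_of_subset ?_ ?_ hdisj
    · rw [he_def, OpenPartialHomeomorph.restrOpen_source]; exact Set.inter_subset_right
    · rw [hf_def, OpenPartialHomeomorph.restrOpen_source]; exact Set.inter_subset_right
  -- the neighbourhood `U` of `z`
  have hzU : (e.target ∩ f.target) ∈ nhds z := by
    refine (e.open_target.inter f.open_target).mem_nhds ⟨?_, ?_⟩
    · have := e.map_source hζe
      rwa [← he] at this
    · have := f.map_source hζf
      rwa [← hf, hqg] at this
  obtain ⟨V, hVopen, hzV, hVU, zs, hzs, hpc⟩ := hyp z _ hzU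
  have hVe : V ⊆ e.target := fun x hx => (hVU hx).1
  -- eventually: `zs n ∈ V`, `g • zs n ∈ V`, `g • e.symm (zs n) ∈ f.source`
  have hev₁ : ∀ᶠ n in Filter.atTop, zs n ∈ V := hzs.eventually (hVopen.mem_nhds hzV)
  have hev₂ : ∀ᶠ n in Filter.atTop, g • zs n ∈ V := by
    have : Filter.Tendsto (fun n => g • zs n) Filter.atTop (nhds z) := by
      have := Filter.Tendsto.comp ((continuous_const_smul g).tendsto z) hzs
      rwa [hgz] at this
    exact this.eventually (hVopen.mem_nhds hzV)
  have hσ : Filter.Tendsto (fun n => e.symm (zs n)) Filter.atTop (nhds ζ) := by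
    have hzt : z ∈ e.target := by
      have := e.map_source hζe; rwa [← he] at this
    have hcont : ContinuousAt e.symm z := (e.continuousOn_symm z hzt).continuousAt
      (e.open_target.mem_nhds hzt)
    have := hcont.tendsto.comp hzs
    have hsymm : e.symm z = ζ := by
      have : e ζ = z := by rw [← he]
      rw [← this, e.left_inv hζe]
    rwa [hsymm] at this
  have hev₃ : ∀ᶠ n in Filter.atTop, g • e.symm (zs n) ∈ f.source := by
    have : Filter.Tendsto (fun n => g • e.symm (zs n)) Filter.atTop (nhds (g • ζ)) :=
      Filter.Tendsto.comp ((continuous_const_smul g).tendsto ζ) hσ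
    exact this.eventually (f.open_source.mem_nhds hζf)
  obtain ⟨n, ⟨hn₁, hn₂⟩, hn₃⟩ := ((hev₁.and hev₂).and hev₃).exists
  set σ : X := e.symm (zs n) with hσdef
  -- path from `1` to `g` in `{h | h • zs n ∈ V}`
  have h1 : (1 : G) ∈ {h : G | h • zs n ∈ V} := by simpa using hn₁
  have hg : g ∈ {h : G | h • zs n ∈ V} := hn₂
  obtain ⟨γ, hγ⟩ := (hpc n).joinedIn 1 h1 g hg
  -- two lifts of the path `t ↦ γ t • zs n`
  set c : unitInterval → X := fun t => γ t • σ with hc_def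
  set d : unitInterval → X := fun t => e.symm (γ t • zs n) with hd_def
  have hqσ : q σ = zs n := by
    rw [he, hσdef]; exact e.right_inv (hVe hn₁)
  have hqc : ∀ t, q (c t) = γ t • zs n := fun t => by rw [hc_def, heq, hqσ]
  have hdmem : ∀ t, d t ∈ e.source := fun t => e.map_target (hVe (hγ t))
  have hqd : ∀ t, q (d t) = γ t • zs n := fun t => by
    rw [hd_def, he]; exact e.right_inv (hVe (hγ t))
  have hcc : Continuous c := γ.continuous.smul continuous_const
  have hdc : Continuous d := e.continuousOn_symm.comp_continuous
    (γ.continuous.smul continuous_const) fun t => hVe (hγ t)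
  -- the agreement set is clopen
  have hA_eq : {t : unitInterval | c t = d t} = c ⁻¹' e.source := by
    ext t
    constructor
    · intro ht
      simp only [Set.mem_preimage, Set.mem_setOf_eq] at *
      rw [ht]; exact hdmem t
    · intro ht
      refine e.injOn ht (hdmem t) ?_
      have := (hqc t).trans (hqd t).symm
      rwa [he] at this
  have hA_clopen : IsClopen {t : unitInterval | c t = d t} := by
    constructor
    · exact isClosed_eq hcc hdc
    · rw [hA_eq]; exact e.open_source.preimage hcc
  have h0A : (0 : unitInterval) ∈ {t : unitInterval | c t = d t} := by
    have hc0 : c 0 = σ := by rw [hc_def]; simp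
    have hd0 : d 0 = σ := by rw [hd_def, hσdef]; simp
    simp only [Set.mem_setOf_eq, hc0, hd0]
  have hA_univ : {t : unitInterval | c t = d t} = Set.univ :=
    hA_clopen.eq_univ ⟨0, h0A⟩
  have h1A : c 1 ∈ e.source := by
    have : (1 : unitInterval) ∈ c ⁻¹' e.source := by rw [← hA_eq, hA_univ]; trivial
    exact this
  have hc1 : c 1 = g • σ := by rw [hc_def]; simp
  rw [hc1] at h1A
  exact (hsrc_disj.ne_of_mem h1A hn₃) rfl
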